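/- Let m ≥ 1 and let F_m = (1/√m)·Σ_{j,k∈Fin m} e^{2πi·jk/m}·|j⟩⟨k| be the discrete Fourier transform on ℂ^m. Then for every n ≥ 1 and every tuple (a_1,…,a_n) ∈ (Fin m)^n, P_{a_1}·F_m · P_{a_2}·F_m ⋯ P_{a_n}·F_m |s⟩ = (δ_{a_n, 0} / m^{(n−1)/2}) · exp(2πi·(a_1·a_2 + a_2·a_3 + ⋯ + a_{n−1}·a_n)/m) · |a_1⟩, where indices a_j ∈ Fin m are identified with the integers 0,1,…,m−1 and a_j·a_{j+1} is the integer product. -/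

import Mathlib

noncomputable section

open scoped BigOperators
open Real

/-- The complex Euclidean space `ℂ^m`. -/
abbrev H (m : ℕ) := EuclideanSpace ℂ (Fin m)

/-- The computational orthonormal basis vector `|a⟩`. -/
def ket {m : ℕ} (a : Fin m) : H m := EuclideanSpace.single a 1

/-- The uniform superposition `|s⟩ = (1/√m) Σ_a |a⟩`. -/
def ketS (m : ℕ) : H m := ((Real.sqrt m : ℂ))⁻¹ • ∑ a : Fin m, ket a

/-- The outer product `|x⟩⟨y|`, i.e. `v ↦ ⟪y, v⟫ • x`. -/
def outer {m : ℕ} (x y : H m) : H m →L[ℂ] H m := (innerSL ℂ y).smulRight x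

/-- The projection `P_a = |a⟩⟨a|`. -/
def P {m : ℕ} (a : Fin m) : H m →L[ℂ] H m := outer (ket a) (ket a)

/-- The discrete Fourier transform `F_m = (1/√m) Σ_{j,k} e^{2πi jk/m} |j⟩⟨k|`. -/
def fourierCoin (m : ℕ) : H m →L[ℂ] H m :=
  ((Real.sqrt m : ℂ))⁻¹ •
    ∑ j : Fin m, ∑ k : Fin m,
      Complex.exp (2 * (π : ℂ) * Complex.I * ((j : ℕ) : ℂ) * ((k : ℕ) : ℂ) / m) •
        outer (ket j) (ket k)

open scoped InnerProductSpace
open Finset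
set_option maxHeartbeats 1000000

lemma outer_apply' {m : ℕ} (x y : H m) (v : H m) : outer x y v = ⟪y, v⟫_ℂ • x := rfl

lemma inner_ket_ket {m : ℕ} (a b : Fin m) : ⟪ket a, ket b⟫_ℂ = if a = b then 1 else 0 := by
  rw [ket, ket, EuclideanSpace.inner_single_left, EuclideanSpace.single_apply]
  simp [eq_comm]

lemma PF_ket {m : ℕ} (a b : Fin m) :
    (P a * fourierCoin m) (ket b) =
      (((Real.sqrt m : ℂ))⁻¹ *
        Complex.exp (2 * (π : ℂ) * Complex.I * ((a : ℕ) : ℂ) * ((b : ℕ) : ℂ) / m)) • ket a := by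
  have hF : fourierCoin m (ket b) =
      ((Real.sqrt m : ℂ))⁻¹ •
        ∑ j : Fin m, Complex.exp (2 * (π : ℂ) * Complex.I * ((j : ℕ) : ℂ) * ((b : ℕ) : ℂ) / m) • ket j := by
    simp only [fourierCoin, ContinuousLinearMap.smul_apply, ContinuousLinearMap.sum_apply,
      ContinuousLinearMap.smul_apply, outer_apply', inner_ket_ket]
    congr 1
    refine Finset.sum_congr rfl fun j _ => ?_
    rw [Finset.sum_eq_single b]
    · simp
    · intro k _ hk; simp [hk]
    · simp
  have hP : ∀ v : H m, P a v = ⟪ket a, v⟫_ℂ • ket a := fun v => rfl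
  rw [ContinuousLinearMap.mul_apply, hF, map_smul, hP, inner_sum]
  simp only [inner_smul_right, inner_ket_ket]
  rw [Finset.sum_eq_single a]
  · simp [smul_smul]
  · intro k _ hk; simp [Ne.symm hk]
  · simp

lemma sum_exp_fin (m : ℕ) (hm : 1 ≤ m) (a : Fin m) :
    ∑ b : Fin m, Complex.exp (2 * (π : ℂ) * Complex.I * ((a : ℕ) : ℂ) * ((b : ℕ) : ℂ) / m)
      = if (a : ℕ) = 0 then (m : ℂ) else 0 := by
  have hm0 : (m : ℂ) ≠ 0 := Nat.cast_ne_zero.mpr (by omega)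
  by_cases ha : (a : ℕ) = 0
  · simp [ha]
  · rw [if_neg ha]
    set x : ℂ := Complex.exp (2 * (π : ℂ) * Complex.I * ((a : ℕ) : ℂ) / m) with hx
    have hterm : ∀ b : Fin m,
        Complex.exp (2 * (π : ℂ) * Complex.I * ((a : ℕ) : ℂ) * ((b : ℕ) : ℂ) / m) = x ^ (b : ℕ) := by
      intro b
      rw [hx, ← Complex.exp_nat_mul]
      ring_nf
    have hxm : x ^ m = 1 := by
      rw [hx, ← Complex.exp_nat_mul]
      have : (m : ℂ) * (2 * (π : ℂ) * Complex.I * ((a : ℕ) : ℂ) / m) = ((a:ℕ):ℂ) * (2 * π * Complex.I) := by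
        field_simp
      rw [this, Complex.exp_nat_mul, Complex.exp_two_pi_mul_I, one_pow]
    have hx1 : x ≠ 1 := by
      intro h
      have h' : Complex.exp (2 * (π : ℂ) * Complex.I * ((a : ℕ) : ℂ) / m) = 1 := h
      rw [Complex.exp_eq_one_iff] at h'
      obtain ⟨k, hk⟩ := h'
      have hca : (2 * (π : ℂ) * Complex.I) * (((a:ℕ):ℂ)) = (2 * (π : ℂ) * Complex.I) * ((k:ℂ) * m) := by
        field_simp at hk
        linear_combination (2 * (π : ℂ) * Complex.I) * hk
      have ha' : (((a:ℕ):ℂ)) = (k:ℂ) * m := mul_left_cancel₀ Complex.two_pi_I_ne_zero hca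
      have ha'' : ((a:ℕ):ℤ) = k * m := by exact_mod_cast ha'
      have hb : 0 < ((a:ℕ):ℤ) := by exact_mod_cast Nat.pos_of_ne_zero ha
      have hlt : ((a:ℕ):ℤ) < m := by exact_mod_cast a.isLt
      have hm1 : (1:ℤ) ≤ m := by exact_mod_cast hm
      rcases lt_trichotomy k 0 with hk0|hk0|hk0
      · nlinarith
      · simp [hk0] at ha''; omega
      · nlinarith
    calc ∑ b : Fin m, Complex.exp (2 * (π : ℂ) * Complex.I * ((a : ℕ) : ℂ) * ((b : ℕ) : ℂ) / m)
        = ∑ i ∈ range m, x ^ i := by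
          rw [← Fin.sum_univ_eq_sum_range]
          exact Finset.sum_congr rfl fun b _ => hterm b
      _ = (x ^ m - 1) / (x - 1) := geom_sum_eq hx1 m
      _ = 0 := by rw [hxm]; simp

lemma sqrt_mul_self' (m : ℕ) : ((Real.sqrt m : ℂ)) * ((Real.sqrt m : ℂ)) = m := by
  rw [← Complex.ofReal_mul, Real.mul_self_sqrt (Nat.cast_nonneg m)]
  norm_num

lemma sqrt_ne_zero' {m : ℕ} (hm : 1 ≤ m) : ((Real.sqrt m : ℂ)) ≠ 0 := by
  simp only [ne_eq, Complex.ofReal_eq_zero]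
  positivity

lemma PF_ketS {m : ℕ} (hm : 1 ≤ m) (a : Fin m) :
    (P a * fourierCoin m) (ketS m) = (if (a : ℕ) = 0 then (1:ℂ) else 0) • ket a := by
  rw [ketS, map_smul, map_sum]
  simp only [PF_ket]
  rw [← Finset.sum_smul, ← Finset.mul_sum, sum_exp_fin m hm a, smul_smul]
  congr 1
  by_cases ha : (a : ℕ) = 0
  · rw [if_pos ha, if_pos ha, ← sqrt_mul_self' m]
    field_simp
    exact div_self (sqrt_ne_zero' hm)
  · simp [ha]


lemma aux_sum (m n : ℕ) (hn : 1 ≤ n) (a : Fin (n+1) → Fin m) (h0 : (0:ℕ) < n + 1) :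
    (∑ j : Fin (n+1), if h : (j : ℕ) + 1 < n + 1 then
          (((a j : ℕ) : ℂ) * ((a ⟨(j : ℕ) + 1, h⟩ : ℕ) : ℂ)) else 0)
        = (((a ⟨0, h0⟩ : ℕ) : ℂ) * ((a (Fin.succ ⟨0, hn⟩) : ℕ) : ℂ))
          + ∑ j : Fin n, if h : (j : ℕ) + 1 < n then
              (((a j.succ : ℕ) : ℂ) * ((a (Fin.succ ⟨(j : ℕ) + 1, h⟩) : ℕ) : ℂ)) else 0 := by
  rw [Fin.sum_univ_succ]
  simp only [Fin.val_succ, Fin.val_zero, zero_add]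
  congr 1
  · rw [dif_pos (show (1:ℕ) < n+1 by omega)]
    exact congrArg₂ (fun x y : Fin m => ((x:ℕ):ℂ) * ((y:ℕ):ℂ))
      (congrArg a (Fin.ext rfl)) (congrArg a (Fin.ext rfl))
  · refine Finset.sum_congr rfl fun j _ => ?_
    by_cases h : (j:ℕ) + 1 < n
    · rw [dif_pos (show (j:ℕ) + 1 + 1 < n + 1 by omega), dif_pos h]
      congr 2
    · rw [dif_neg (show ¬((j:ℕ) + 1 + 1 < n + 1) by omega), dif_neg h]

/-- Lemma 5 of the paper: for every tuple `(a_1, …, a_n)`,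
`P_{a_1} F_m ⋯ P_{a_n} F_m |s⟩
  = (δ_{a_n,0} / m^{(n-1)/2}) e^{2πi (a_1 a_2 + ⋯ + a_{n-1} a_n)/m} |a_1⟩`,
where indices in `Fin m` are identified with the integers `0, …, m-1`. -/
theorem fourier_proj_prod_ketS (m : ℕ) (hm : 1 ≤ m) (n : ℕ) (hn : 1 ≤ n)
    (a : Fin n → Fin m) :
    (List.ofFn (fun j : Fin n => P (a j) * fourierCoin m)).prod (ketS m)
      = (((if (a ⟨n - 1, by omega⟩ : ℕ) = 0 then 1 else 0) /
            ((Real.sqrt m : ℂ)) ^ (n - 1)) *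
          Complex.exp (2 * (π : ℂ) * Complex.I *
            (∑ j : Fin n, if h : (j : ℕ) + 1 < n then
              (((a j : ℕ) : ℂ) * ((a ⟨(j : ℕ) + 1, h⟩ : ℕ) : ℂ)) else 0) / m)) •
          ket (a ⟨0, by omega⟩) := by
  induction n, hn using Nat.le_induction with
  | base =>
    simp only [List.ofFn_succ, List.ofFn_zero, List.prod_cons, List.prod_nil, mul_one]
    rw [PF_ketS hm]
    norm_num
  | succ n hn ih =>
    have h0 : (0:ℕ) < n + 1 := by omega
    rw [List.ofFn_succ, List.prod_cons, ContinuousLinearMap.mul_apply]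
    rw [ih (fun j => a j.succ), map_smul, PF_ket, smul_smul]
    congr 1
    have hfin : Fin.succ (⟨n - 1, by omega⟩ : Fin n) = (⟨n + 1 - 1, by omega⟩ : Fin (n+1)) := by
      apply Fin.ext
      simp only [Fin.val_succ]
      omega
    have hδ : (a (Fin.succ ⟨n - 1, by omega⟩) : ℕ) = (a ⟨n + 1 - 1, by omega⟩ : ℕ) := by
      rw [hfin]
    rw [aux_sum m n hn a h0]
    have hpow : ((Real.sqrt m : ℂ)) ^ (n + 1 - 1) = ((Real.sqrt m : ℂ)) ^ (n - 1) * ((Real.sqrt m : ℂ)) := by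
      have : n + 1 - 1 = (n - 1) + 1 := by omega
      rw [this, pow_succ]
    rw [hpow, hδ]
    rw [mul_add, add_div, Complex.exp_add]
    have e1 : Complex.exp (2 * (π : ℂ) * Complex.I *
        (((a ⟨0, h0⟩ : ℕ) : ℂ) * ((a (Fin.succ ⟨0, hn⟩) : ℕ) : ℂ)) / m)
        = Complex.exp (2 * (π : ℂ) * Complex.I * ((a ⟨0, h0⟩ : ℕ) : ℂ) * ((a (Fin.succ ⟨0, hn⟩) : ℕ) : ℂ) / m) := by
      ring_nf
    rw [e1]
    split_ifs with hd
    · field_simp [sqrt_ne_zero' hm]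
      simp only [Fin.zero_eta]
      ring
    · simp
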